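/- Let d ≥ 3, let {a_i}_{i=1}^d and {b_j}_{j=1}^d be mutually unbiased orthonormal bases of ℂ^d, and let 1 ≤ m < d/2. Let A = {|a_i⟩⟨a_i|}_{i=1}^d and let B = {P^B_1, P^B_2} with P^B_1 = Σ_{j=1}^m |b_j⟩⟨b_j| and P^B_2 = I − P^B_1. Then Q_F(B→A) ≤ 1/2 < Q_F(A→B); in particular Q_F(A→B) ≠ Q_F(B→A). Moreover, for the pure state ψ = b_1 one has (Σ_j √(q^{A→B}_ψ(j) · p^B_ψ(j)))² = m/d. -/

import Mathlib

open scoped BigOperators ComplexOrder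
open Matrix

noncomputable section

/-- A projective observable: a finite family of mutually orthogonal
self-adjoint idempotents summing to the identity. -/
def IsProjObs {d r : ℕ} (P : Fin r → Matrix (Fin d) (Fin d) ℂ) : Prop :=
  (∀ i, (P i).IsHermitian) ∧ (∀ i, P i * P i = P i) ∧
    (∀ i k, i ≠ k → P i * P k = 0) ∧ (∑ i, P i = 1)

/-- A density matrix: positive semidefinite with unit trace. -/
def IsDensity {d : ℕ} (ρ : Matrix (Fin d) (Fin d) ℂ) : Prop :=
  ρ.PosSemidef ∧ ρ.trace = 1

/-- The measurement channel `E^A(ρ) = Σ_i P_i ρ P_i` of a projective observable. -/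
def measChannel {d r : ℕ} (P : Fin r → Matrix (Fin d) (Fin d) ℂ)
    (ρ : Matrix (Fin d) (Fin d) ℂ) : Matrix (Fin d) (Fin d) ℂ :=
  ∑ i, P i * ρ * P i

/-- `p^B_ρ(j) = tr(P^B_j ρ)`. -/
def probB {d rB : ℕ} (Q : Fin rB → Matrix (Fin d) (Fin d) ℂ)
    (ρ : Matrix (Fin d) (Fin d) ℂ) (j : Fin rB) : ℝ :=
  ((Q j * ρ).trace).re

/-- `q^{A→B}_ρ(j) = tr(P^B_j Σ_i P^A_i ρ P^A_i)`. -/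
def probAB {d rA rB : ℕ} (P : Fin rA → Matrix (Fin d) (Fin d) ℂ)
    (Q : Fin rB → Matrix (Fin d) (Fin d) ℂ)
    (ρ : Matrix (Fin d) (Fin d) ℂ) (j : Fin rB) : ℝ :=
  ((Q j * measChannel P ρ).trace).re

open Classical in
/-- The positive semidefinite square root of a PSD matrix (junk value `0` otherwise). -/
noncomputable def msqrt {d : ℕ} (A : Matrix (Fin d) (Fin d) ℂ) :
    Matrix (Fin d) (Fin d) ℂ :=
  if h : A.PosSemidef then
    (h.1.eigenvectorUnitary : Matrix (Fin d) (Fin d) ℂ) *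
      diagonal ((fun x : ℝ => (x : ℂ)) ∘ Real.sqrt ∘ h.1.eigenvalues) *
      (star h.1.eigenvectorUnitary : Matrix (Fin d) (Fin d) ℂ)
  else 0

/-- `|X| = √(Xᴴ X)`, the positive semidefinite absolute value of a matrix. -/
noncomputable def matAbs {d : ℕ} (X : Matrix (Fin d) (Fin d) ℂ) :
    Matrix (Fin d) (Fin d) ℂ :=
  msqrt (Xᴴ * X)

/-- The quantum fidelity `F(ρ,σ) = tr √(√ρ σ √ρ)`. -/
noncomputable def qFid {d : ℕ} (ρ σ : Matrix (Fin d) (Fin d) ℂ) : ℝ :=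
  ((msqrt (msqrt ρ * σ * msqrt ρ)).trace).re

/-- Variational distance `D_1(p,q) = (1/2) Σ_j |p_j − q_j|`. -/
def distL1 {rB : ℕ} (p q : Fin rB → ℝ) : ℝ := (1 / 2) * ∑ j, |p j - q j|

/-- Chebyshev distance `D_∞(p,q) = max_j |p_j − q_j|`. -/
noncomputable def distLinf {rB : ℕ} (p q : Fin rB → ℝ) : ℝ := ⨆ j, |p j - q j|

/-- Classical fidelity `F(p,q) = Σ_j √(p_j q_j)`. -/
noncomputable def classFid {rB : ℕ} (p q : Fin rB → ℝ) : ℝ :=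
  ∑ j, Real.sqrt (p j * q j)

/-- `Q_1(A→B)`. -/
noncomputable def Q1 {d rA rB : ℕ} (P : Fin rA → Matrix (Fin d) (Fin d) ℂ)
    (Q : Fin rB → Matrix (Fin d) (Fin d) ℂ) : ℝ :=
  sSup {x : ℝ | ∃ ρ, IsDensity ρ ∧ x = distL1 (probAB P Q ρ) (probB Q ρ)}

/-- `Q_∞(A→B)`. -/
noncomputable def Qinf {d rA rB : ℕ} (P : Fin rA → Matrix (Fin d) (Fin d) ℂ)
    (Q : Fin rB → Matrix (Fin d) (Fin d) ℂ) : ℝ :=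
  sSup {x : ℝ | ∃ ρ, IsDensity ρ ∧ x = distLinf (probAB P Q ρ) (probB Q ρ)}

/-- `Q_F(A→B)`. -/
noncomputable def QF {d rA rB : ℕ} (P : Fin rA → Matrix (Fin d) (Fin d) ℂ)
    (Q : Fin rB → Matrix (Fin d) (Fin d) ℂ) : ℝ :=
  sSup {x : ℝ | ∃ ρ, IsDensity ρ ∧
    x = 1 - (classFid (probAB P Q ρ) (probB Q ρ)) ^ 2}

/-- The rank-one projection `|v⟩⟨v|` onto a (unit) vector `v`. -/
def proj {d : ℕ} (v : Fin d → ℂ) : Matrix (Fin d) (Fin d) ℂ :=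
  Matrix.vecMulVec v (star v)

section Stmt19Aux
variable {d : ℕ}

lemma vmv_mul_vmv (u w x y : Fin d → ℂ) :
    Matrix.vecMulVec u w * Matrix.vecMulVec x y = (w ⬝ᵥ x) • Matrix.vecMulVec u y := by
  ext i j
  simp only [Matrix.mul_apply, Matrix.vecMulVec_apply, Matrix.smul_apply, dotProduct,
    Finset.sum_mul, smul_eq_mul, Finset.mul_sum]
  exact Finset.sum_congr rfl fun k _ => by ring

lemma proj_mulVec (v w : Fin d → ℂ) : proj v *ᵥ w = (star v ⬝ᵥ w) • v := by
  ext i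
  simp only [proj, Matrix.mulVec, Matrix.vecMulVec_apply, dotProduct, Pi.smul_apply,
    smul_eq_mul, Finset.sum_mul, Finset.mul_sum, Pi.star_apply]
  exact Finset.sum_congr rfl fun k _ => by ring

lemma trace_proj_mul (v : Fin d → ℂ) (M : Matrix (Fin d) (Fin d) ℂ) :
    (proj v * M).trace = star v ⬝ᵥ (M *ᵥ v) := by
  simp only [proj, Matrix.trace, Matrix.diag, Matrix.mul_apply, Matrix.vecMulVec_apply,
    Matrix.mulVec, dotProduct, Pi.star_apply, Finset.mul_sum]
  rw [Finset.sum_comm]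
  exact Finset.sum_congr rfl fun i _ => Finset.sum_congr rfl fun j _ => by ring

lemma proj_conjT (v : Fin d → ℂ) : (proj v)ᴴ = proj v := by
  ext i j
  simp [proj, Matrix.conjTranspose_apply, Matrix.vecMulVec_apply, mul_comm]

lemma proj_trace (v : Fin d → ℂ) : (proj v).trace = star v ⬝ᵥ v := by
  simp only [proj, Matrix.trace, Matrix.diag, Matrix.vecMulVec_apply, dotProduct, Pi.star_apply]
  exact Finset.sum_congr rfl fun k _ => by ring

lemma dot_star_comm (u w : Fin d → ℂ) : star w ⬝ᵥ u = starRingEnd ℂ (star u ⬝ᵥ w) := by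
  simp only [dotProduct, Pi.star_apply, map_sum, _root_.map_mul, Complex.conj_conj, RingHom.coe_coe]
  exact Finset.sum_congr rfl fun k _ => by simp [mul_comm]

lemma proj_posSemidef (v : Fin d → ℂ) : (proj v).PosSemidef := by
  refine Matrix.PosSemidef.of_dotProduct_mulVec_nonneg (proj_conjT v) fun x => ?_
  rw [proj_mulVec, dotProduct_smul]
  have h1 : star x ⬝ᵥ v = starRingEnd ℂ (star v ⬝ᵥ x) := dot_star_comm v x
  rw [smul_eq_mul, h1, Complex.mul_conj]
  exact_mod_cast Complex.zero_le_real.mpr (Complex.normSq_nonneg _)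

lemma sum_proj_eq_one (a : Fin d → Fin d → ℂ)
    (ha : ∀ i j, star (a i) ⬝ᵥ a j = if i = j then 1 else 0) :
    ∑ i, proj (a i) = 1 := by
  let U : Matrix (Fin d) (Fin d) ℂ := Matrix.of fun k i => a i k
  have hU : Uᴴ * U = 1 := by
    ext i j
    simpa [U, Matrix.mul_apply, Matrix.conjTranspose_apply, dotProduct,
      Matrix.one_apply] using ha i j
  have hU2 : U * Uᴴ = 1 := mul_eq_one_comm.mp hU
  ext k l
  calc (∑ i, proj (a i)) k l = (U * Uᴴ) k l := by
        simp [Matrix.sum_apply, proj, Matrix.vecMulVec_apply, Matrix.mul_apply, U,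
          Matrix.conjTranspose_apply]
  _ = (1 : Matrix (Fin d) (Fin d) ℂ) k l := by rw [hU2]

lemma re_quad_nonneg {ρ : Matrix (Fin d) (Fin d) ℂ} (hρ : ρ.PosSemidef) (x : Fin d → ℂ) :
    0 ≤ (star x ⬝ᵥ ρ *ᵥ x).re := by
  simpa using (Complex.le_def.mp (hρ.dotProduct_mulVec_nonneg x)).1

lemma quad_add (ρ : Matrix (Fin d) (Fin d) ℂ) (x y : Fin d → ℂ) :
    star (x + y) ⬝ᵥ ρ *ᵥ (x + y) + star (x - y) ⬝ᵥ ρ *ᵥ (x - y)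
      = 2 * (star x ⬝ᵥ ρ *ᵥ x) + 2 * (star y ⬝ᵥ ρ *ᵥ y) := by
  simp only [Matrix.mulVec_add, Matrix.mulVec_sub, dotProduct_add, dotProduct_sub,
    add_dotProduct, sub_dotProduct, star_add, star_sub]
  ring

lemma quad_conj (N ρ : Matrix (Fin d) (Fin d) ℂ) (hN : Nᴴ = N) (u : Fin d → ℂ) :
    star u ⬝ᵥ (N * ρ * N) *ᵥ u = star (N *ᵥ u) ⬝ᵥ ρ *ᵥ (N *ᵥ u) := by
  rw [← Matrix.mulVec_mulVec, ← Matrix.mulVec_mulVec, Matrix.dotProduct_mulVec,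
    Matrix.star_mulVec, hN]

lemma proj_mul_proj_mul_proj (u w : Fin d → ℂ) :
    proj u * proj w * proj u = ((star u ⬝ᵥ w) * (star w ⬝ᵥ u)) • proj u := by
  simp only [proj]
  rw [vmv_mul_vmv, Matrix.smul_mul, vmv_mul_vmv, smul_smul]

lemma re_quad_ineq {ρ : Matrix (Fin d) (Fin d) ℂ} (hρ : ρ.PosSemidef) (x y : Fin d → ℂ) :
    (star (x + y) ⬝ᵥ ρ *ᵥ (x + y)).re
      ≤ 2 * ((star x ⬝ᵥ ρ *ᵥ x).re + (star y ⬝ᵥ ρ *ᵥ y).re) := by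
  have h := quad_add ρ x y
  rw [two_mul, two_mul] at h
  have h' := congrArg Complex.re h
  simp only [Complex.add_re] at h'
  have hnn := re_quad_nonneg hρ (x - y)
  linarith

end Stmt19Aux

theorem stmt_19 {d m : ℕ} (hd : 3 ≤ d) (hm1 : 1 ≤ m) (hm2 : 2 * m < d)
    (a b : Fin d → (Fin d → ℂ))
    (ha : ∀ i j, star (a i) ⬝ᵥ a j = if i = j then 1 else 0)
    (hb : ∀ i j, star (b i) ⬝ᵥ b j = if i = j then 1 else 0)
    (hmub : ∀ i j, Complex.normSq (star (a i) ⬝ᵥ b j) = 1 / (d : ℝ))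
    (PB : Fin 2 → Matrix (Fin d) (Fin d) ℂ)
    (hPB0 : PB 0 = ∑ j ∈ Finset.univ.filter (fun j : Fin d => (j : ℕ) < m), proj (b j))
    (hPB1 : PB 1 = 1 - PB 0) :
    QF PB (fun i => proj (a i)) ≤ 1 / 2 ∧
      1 / 2 < QF (fun i => proj (a i)) PB ∧
      (classFid
          (probAB (fun i => proj (a i)) PB (proj (b ⟨0, by omega⟩)))
          (probB PB (proj (b ⟨0, by omega⟩)))) ^ 2 = (m : ℝ) / (d : ℝ) := by
  classical
  have hdpos : 0 < d := by omega
  have hdR : (0:ℝ) < (d:ℝ) := by exact_mod_cast hdpos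
  set z : Fin d := ⟨0, by omega⟩ with hz
  set v : Fin d → ℂ := b z with hv
  set s : Finset (Fin d) := Finset.univ.filter (fun j : Fin d => (j:ℕ) < m) with hs
  have hscard : s.card = m := by
    have hse : s = Finset.Iio (⟨m, by omega⟩ : Fin d) := by
      ext k
      simp [hs, Finset.mem_Iio, Fin.lt_def]
    rw [hse, Fin.card_Iio]
  have hzs : z ∈ s := by
    simp only [hs, Finset.mem_filter, Finset.mem_univ, true_and, hz]
    omega
  have hPBsum : PB 0 + PB 1 = 1 := by rw [hPB1]; abel
  have hPB0H : (PB 0)ᴴ = PB 0 := by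
    rw [hPB0, Matrix.conjTranspose_sum]
    exact Finset.sum_congr rfl fun k _ => proj_conjT _
  have hPB1H : (PB 1)ᴴ = PB 1 := by
    rw [hPB1, Matrix.conjTranspose_sub, Matrix.conjTranspose_one, hPB0H]
  have hbv : star v ⬝ᵥ v = 1 := by rw [hv, hb]; simp
  have hρ0 : IsDensity (proj v) := ⟨proj_posSemidef v, by rw [proj_trace, hbv]⟩
  -- trace of PB0 against a projection
  have htrPB0 : ∀ u : Fin d → ℂ, (PB 0 * proj u).trace
      = ∑ k ∈ s, (star (b k) ⬝ᵥ u) * (star u ⬝ᵥ b k) := by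
    intro u
    rw [hPB0, Finset.sum_mul, Matrix.trace_sum]
    refine Finset.sum_congr rfl fun k _ => ?_
    rw [trace_proj_mul, proj_mulVec, dotProduct_smul, smul_eq_mul, mul_comm]
  have htr0 : (PB 0 * proj v).trace = 1 := by
    rw [htrPB0 v]
    have hterm : ∀ k, (star (b k) ⬝ᵥ v) * (star v ⬝ᵥ b k) = if k = z then 1 else 0 := by
      intro k
      rw [hv, hb, hb]
      by_cases h : k = z
      · simp [h]
      · simp [h, Ne.symm h]
    rw [Finset.sum_congr rfl fun k _ => hterm k, Finset.sum_ite_eq' s z (fun _ => (1:ℂ))]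
    simp [hzs]
  have hp0 : probB PB (proj v) 0 = 1 := by
    simp only [probB]
    rw [htr0, Complex.one_re]
  have hp1 : probB PB (proj v) 1 = 0 := by
    simp only [probB]
    rw [hPB1, Matrix.sub_mul, Matrix.one_mul, Matrix.trace_sub, proj_trace, hbv, htr0]
    simp
  -- the measurement channel applied to proj v
  have hci : ∀ i, (star (a i) ⬝ᵥ v) * (star v ⬝ᵥ a i) = (((1:ℝ)/(d:ℝ) : ℝ) : ℂ) := by
    intro i
    rw [dot_star_comm (a i) v, Complex.mul_conj, hv, hmub i z]
  have hmeas : measChannel (fun i => proj (a i)) (proj v)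
      = ∑ i, (((1:ℝ)/(d:ℝ) : ℝ) : ℂ) • proj (a i) := by
    simp only [measChannel]
    refine Finset.sum_congr rfl fun i _ => ?_
    rw [proj_mul_proj_mul_proj, hci i]
  have htrPB0ai : ∀ i, (PB 0 * proj (a i)).trace = (m:ℂ) * (((1:ℝ)/(d:ℝ) : ℝ):ℂ) := by
    intro i
    rw [htrPB0 (a i)]
    have hterm : ∀ k, (star (b k) ⬝ᵥ a i) * (star (a i) ⬝ᵥ b k)
        = (((1:ℝ)/(d:ℝ) : ℝ):ℂ) := by
      intro k
      rw [dot_star_comm (a i) (b k), mul_comm, Complex.mul_conj, hmub i k]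
    rw [Finset.sum_congr rfl fun k _ => hterm k, Finset.sum_const, hscard, nsmul_eq_mul]
  have htrq0 : (PB 0 * measChannel (fun i => proj (a i)) (proj v)).trace
      = (((m:ℝ)/(d:ℝ) : ℝ):ℂ) := by
    rw [hmeas, Matrix.mul_sum, Matrix.trace_sum]
    have hterm : ∀ i : Fin d, (PB 0 * ((((1:ℝ)/(d:ℝ) : ℝ):ℂ) • proj (a i))).trace
        = (((1:ℝ)/(d:ℝ) : ℝ):ℂ) * ((m:ℂ) * (((1:ℝ)/(d:ℝ) : ℝ):ℂ)) := by
      intro i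
      rw [Matrix.mul_smul, Matrix.trace_smul, htrPB0ai i, smul_eq_mul]
    rw [Finset.sum_congr rfl fun i _ => hterm i, Finset.sum_const, Finset.card_univ,
      Fintype.card_fin, nsmul_eq_mul]
    have hdC : (d:ℂ) ≠ 0 := Nat.cast_ne_zero.mpr (by omega)
    push_cast
    field_simp
  have hq0 : probAB (fun i => proj (a i)) PB (proj v) 0 = (m:ℝ)/(d:ℝ) := by
    simp only [probAB]
    rw [htrq0, Complex.ofReal_re]
  have htrmeas : (measChannel (fun i => proj (a i)) (proj v)).trace = 1 := by
    rw [hmeas, Matrix.trace_sum]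
    have hterm : ∀ i : Fin d, ((((1:ℝ)/(d:ℝ) : ℝ):ℂ) • proj (a i)).trace
        = (((1:ℝ)/(d:ℝ) : ℝ):ℂ) := by
      intro i
      rw [Matrix.trace_smul, proj_trace, ha i i]
      simp
    rw [Finset.sum_congr rfl fun i _ => hterm i, Finset.sum_const, Finset.card_univ,
      Fintype.card_fin, nsmul_eq_mul]
    have hdC : (d:ℂ) ≠ 0 := Nat.cast_ne_zero.mpr (by omega)
    push_cast
    field_simp
  have hq1 : probAB (fun i => proj (a i)) PB (proj v) 1 = 1 - (m:ℝ)/(d:ℝ) := by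
    simp only [probAB]
    rw [hPB1, Matrix.sub_mul, Matrix.one_mul, Matrix.trace_sub, htrmeas, htrq0]
    simp
  have hmdnn : 0 ≤ (m:ℝ)/(d:ℝ) := by positivity
  have hF2 : (classFid (probAB (fun i => proj (a i)) PB (proj v)) (probB PB (proj v)))^2
      = (m:ℝ)/(d:ℝ) := by
    rw [classFid, Fin.sum_univ_two, hq0, hq1, hp0, hp1]
    rw [mul_one, mul_zero, Real.sqrt_zero, add_zero, Real.sq_sqrt hmdnn]
  have hmdlt : (m:ℝ)/(d:ℝ) < 1/2 := by
    rw [div_lt_iff₀ hdR]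
    have : (2*m:ℝ) < (d:ℝ) := by exact_mod_cast hm2
    linarith
  refine ⟨?_, ?_, hF2⟩
  · -- Part 1 : QF PB A ≤ 1/2
    apply Real.sSup_le _ (by norm_num)
    rintro x ⟨ρ, hρ, rfl⟩
    have hp_eq : ∀ i, probB (fun i => proj (a i)) ρ i = (star (a i) ⬝ᵥ ρ *ᵥ a i).re := by
      intro i
      simp only [probB]
      rw [trace_proj_mul]
    have hpnn : ∀ i, 0 ≤ probB (fun i => proj (a i)) ρ i := by
      intro i
      rw [hp_eq i]
      exact re_quad_nonneg hρ.1 (a i)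
    have hq_eq : ∀ i, probAB PB (fun i => proj (a i)) ρ i
        = (star (PB 0 *ᵥ a i) ⬝ᵥ ρ *ᵥ (PB 0 *ᵥ a i)).re
          + (star (PB 1 *ᵥ a i) ⬝ᵥ ρ *ᵥ (PB 1 *ᵥ a i)).re := by
      intro i
      simp only [probAB, measChannel]
      rw [Fin.sum_univ_two, trace_proj_mul, Matrix.add_mulVec, dotProduct_add,
        quad_conj _ _ hPB0H, quad_conj _ _ hPB1H, Complex.add_re]
    have hkey : ∀ i, probB (fun i => proj (a i)) ρ i
        ≤ 2 * probAB PB (fun i => proj (a i)) ρ i := by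
      intro i
      have hxy : PB 0 *ᵥ a i + PB 1 *ᵥ a i = a i := by
        rw [← Matrix.add_mulVec, hPBsum, Matrix.one_mulVec]
      have hineq := re_quad_ineq hρ.1 (PB 0 *ᵥ a i) (PB 1 *ᵥ a i)
      rw [hxy] at hineq
      rw [hp_eq i, hq_eq i]
      exact hineq
    have hpsum : ∑ i, probB (fun i => proj (a i)) ρ i = 1 := by
      have h1 : ∑ i, (proj (a i) * ρ).trace = 1 := by
        rw [← Matrix.trace_sum, ← Finset.sum_mul, sum_proj_eq_one a ha, Matrix.one_mul, hρ.2]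
      calc ∑ i, probB (fun i => proj (a i)) ρ i
          = (∑ i, (proj (a i) * ρ).trace).re := by
            rw [Complex.re_sum]
            exact Finset.sum_congr rfl fun i _ => by simp only [probB]
      _ = 1 := by rw [h1, Complex.one_re]
    set p : Fin d → ℝ := probB (fun i => proj (a i)) ρ with hpdef
    set q : Fin d → ℝ := probAB PB (fun i => proj (a i)) ρ with hqdef
    have hterm : ∀ i, p i * Real.sqrt (1/2) ≤ Real.sqrt (q i * p i) := by
      intro i
      have h1 : p i * p i * (1/2) ≤ q i * p i := by
        nlinarith [mul_nonneg (hpnn i) (by linarith [hkey i] : (0:ℝ) ≤ q i - p i / 2)]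
      calc p i * Real.sqrt (1/2) = Real.sqrt (p i * p i * (1/2)) := by
            rw [Real.sqrt_mul (mul_self_nonneg _), Real.sqrt_mul_self (hpnn i)]
      _ ≤ Real.sqrt (q i * p i) := Real.sqrt_le_sqrt h1
    have hFge : Real.sqrt (1/2) ≤ classFid q p := by
      calc Real.sqrt (1/2) = (∑ i, p i) * Real.sqrt (1/2) := by rw [hpsum, one_mul]
      _ = ∑ i, p i * Real.sqrt (1/2) := by rw [Finset.sum_mul]
      _ ≤ ∑ i, Real.sqrt (q i * p i) := Finset.sum_le_sum fun i _ => hterm i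
      _ = classFid q p := rfl
    have hsq : (1:ℝ)/2 ≤ (classFid q p)^2 := by
      have h0 : 0 ≤ Real.sqrt (1/2) := Real.sqrt_nonneg _
      have h2 := pow_le_pow_left₀ h0 hFge 2
      rwa [Real.sq_sqrt (by norm_num : (0:ℝ) ≤ 1/2)] at h2
    linarith
  · -- Part 2 : 1/2 < QF A PB
    have hbdd : BddAbove {x : ℝ | ∃ ρ, IsDensity ρ ∧
        x = 1 - (classFid (probAB (fun i => proj (a i)) PB ρ) (probB PB ρ)) ^ 2} := by
      refine ⟨1, ?_⟩
      rintro x ⟨ρ, hρ, rfl⟩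
      nlinarith [sq_nonneg (classFid (probAB (fun i => proj (a i)) PB ρ) (probB PB ρ))]
    have hmem : (1 - (m:ℝ)/(d:ℝ)) ∈ {x : ℝ | ∃ ρ, IsDensity ρ ∧
        x = 1 - (classFid (probAB (fun i => proj (a i)) PB ρ) (probB PB ρ)) ^ 2} :=
      ⟨proj v, hρ0, by rw [hF2]⟩
    have hle := le_csSup hbdd hmem
    calc (1:ℝ)/2 < 1 - (m:ℝ)/(d:ℝ) := by linarith
    _ ≤ QF (fun i => proj (a i)) PB := hle


end
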